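/- arXiv:2105.08748 — 4 statements merged into one kernel-verified Lean document; each statement's English description precedes it below -/
import Mathlib

section
/- Fix reals μ, ε with 0 < μ−ε < μ < 1 and α ∈ (0,1). Let (X_i)_{i≥1} be i.i.d. Bernoulli(μ_a) random variables with μ_a > μ. Then almost surely Λ_t → ∞ as t → ∞; in particular, almost surely there exists a positive integer t with Λ_t ≥ log(1/α). -/
open MeasureTheory ProbabilityTheory Finset Filter
open scoped ENNReal NNReal

/-- Lemma 2(i): for i.i.d. `Bernoulli(μ_a)` samples with `μ_a > μ`, the log-likelihood ratio
`Λ_t = ∑_{i<t} (X_i·L0 − (1−X_i)·L1)` tends to `∞` almost surely; in particular, almost surely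
there is a positive integer `t` with `Λ_t ≥ log(1/α)`. -/
theorem stmt_3 {Ω : Type*} [MeasurableSpace Ω] (P : Measure Ω) [IsProbabilityMeasure P]
    (μ ε α μa : ℝ) (hε : 0 < ε) (hμε : 0 < μ - ε) (hμ : μ < 1)
    (hα : α ∈ Set.Ioo (0 : ℝ) 1) (hμa : μ < μa) (hμa1 : μa ≤ 1)
    (X : ℕ → Ω → ℝ)
    (hmeas : ∀ i, Measurable (X i))
    (h01 : ∀ i ω, X i ω = 0 ∨ X i ω = 1)
    (hindep : iIndepFun X P)
    (hdist : ∀ i, P {ω | X i ω = 1} = ENNReal.ofReal μa) :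
    ∀ᵐ ω ∂P,
      Tendsto
        (fun t => ∑ i ∈ range t,
          (X i ω * Real.log (μ / (μ - ε))
            - (1 - X i ω) * Real.log ((1 - μ + ε) / (1 - μ)))) atTop atTop
      ∧ ∃ t : ℕ, 1 ≤ t ∧
          Real.log (1 / α) ≤ ∑ i ∈ range t,
            (X i ω * Real.log (μ / (μ - ε))
              - (1 - X i ω) * Real.log ((1 - μ + ε) / (1 - μ))) := by
  set L0 : ℝ := Real.log (μ / (μ - ε)) with hL0def
  set L1 : ℝ := Real.log ((1 - μ + ε) / (1 - μ)) with hL1def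
  have hμpos : 0 < μ := by linarith
  have h1μ : 0 < 1 - μ := by linarith
  have hμa0 : 0 < μa := lt_trans hμpos hμa
  -- the function
  set f : ℝ → ℝ := fun x => x * L0 - (1 - x) * L1 with hfdef
  have hf : Measurable f :=
    (measurable_id.mul_const _).sub ((measurable_const.sub measurable_id).mul_const _)
  set Y : ℕ → Ω → ℝ := fun i ω => f (X i ω) with hYdef
  -- positivity of the mean
  set m : ℝ := μa * L0 - (1 - μa) * L1 with hmdef
  have hKL : 0 ≤ μ * L0 - (1 - μ) * L1 := by
    have h1 : Real.log ((μ - ε) / μ) ≤ (μ - ε) / μ - 1 :=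
      Real.log_le_sub_one_of_pos (by positivity)
    have h2 : L1 ≤ (1 - μ + ε) / (1 - μ) - 1 :=
      Real.log_le_sub_one_of_pos (by positivity)
    have h3 : Real.log ((μ - ε) / μ) = -L0 := by
      rw [hL0def, ← Real.log_inv]
      congr 1
      field_simp
    rw [h3] at h1
    have e1 : (μ - ε) / μ - 1 = -ε / μ := by field_simp; ring
    have e2 : (1 - μ + ε) / (1 - μ) - 1 = ε / (1 - μ) := by field_simp; ring
    rw [e1] at h1; rw [e2] at h2
    have h4 : μ * (-L0) ≤ μ * (-ε / μ) := by
      exact mul_le_mul_of_nonneg_left h1 hμpos.le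
    have h5 : (1 - μ) * L1 ≤ (1 - μ) * (ε / (1 - μ)) := by
      exact mul_le_mul_of_nonneg_left h2 h1μ.le
    have e3 : μ * (-ε / μ) = -ε := by field_simp
    have e4 : (1 - μ) * (ε / (1 - μ)) = ε := by field_simp
    nlinarith
  have hL0pos : 0 < L0 := by
    apply Real.log_pos
    rw [lt_div_iff₀ hμε]; linarith
  have hL1pos : 0 < L1 := by
    apply Real.log_pos
    rw [lt_div_iff₀ h1μ]; linarith
  have hmpos : 0 < m := by
    have : m = (μ * L0 - (1 - μ) * L1) + (μa - μ) * (L0 + L1) := by ring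
    nlinarith
  -- the common law of the X i
  set ν : Measure ℝ := ENNReal.ofReal μa • Measure.dirac 1
      + ENNReal.ofReal (1 - μa) • Measure.dirac 0 with hνdef
  have hAmeas : ∀ i, MeasurableSet {ω | X i ω = 1} := fun i =>
    (hmeas i) (measurableSet_singleton 1)
  have hcompl : ∀ i, {ω | X i ω = 1}ᶜ = {ω | X i ω = 0} := by
    intro i
    ext ω
    simp only [Set.mem_compl_iff, Set.mem_setOf_eq]
    rcases h01 i ω with h | h <;> simp [h]
  have hP0 : ∀ i, P {ω | X i ω = 0} = ENNReal.ofReal (1 - μa) := by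
    intro i
    rw [← hcompl i, prob_compl_eq_one_sub (hAmeas i), hdist i,
      ENNReal.ofReal_sub _ hμa0.le]
    simp
  have hlaw : ∀ i, Measure.map (X i) P = ν := by
    intro i
    ext s hs
    rw [Measure.map_apply (hmeas i) hs]
    have hν : ν s = (ENNReal.ofReal μa) * s.indicator 1 1
        + (ENNReal.ofReal (1 - μa)) * s.indicator 1 0 := by
      simp [hνdef, Measure.dirac_apply' _ hs]
    by_cases h1 : (1:ℝ) ∈ s <;> by_cases h0 : (0:ℝ) ∈ s
    · have : X i ⁻¹' s = Set.univ := by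
        ext ω; rcases h01 i ω with h | h <;> simp [h, h0, h1]
      rw [this, hν]
      simp only [Set.indicator_of_mem h1, Set.indicator_of_mem h0, Pi.one_apply, mul_one]
      rw [← ENNReal.ofReal_add hμa0.le (by linarith)]
      simp
    · have : X i ⁻¹' s = {ω | X i ω = 1} := by
        ext ω; rcases h01 i ω with h | h <;> simp [h, h0, h1]
      rw [this, hν, hdist i]
      simp [Set.indicator_of_mem h1, Set.indicator_of_notMem h0]
    · have : X i ⁻¹' s = {ω | X i ω = 0} := by
        ext ω; rcases h01 i ω with h | h <;> simp [h, h0, h1]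
      rw [this, hν, hP0 i]
      simp [Set.indicator_of_mem h0, Set.indicator_of_notMem h1]
    · have : X i ⁻¹' s = ∅ := by
        ext ω; rcases h01 i ω with h | h <;> simp [h, h0, h1]
      rw [this, hν]
      simp [Set.indicator_of_notMem h0, Set.indicator_of_notMem h1]
  have hidentX : ∀ i, IdentDistrib (X i) (X 0) P P := fun i =>
    ⟨(hmeas i).aemeasurable, (hmeas 0).aemeasurable, by rw [hlaw i, hlaw 0]⟩
  have hidentY : ∀ i, IdentDistrib (Y i) (Y 0) P P := fun i =>
    (hidentX i).comp hf
  have hindepY : Pairwise (Function.onFun (IndepFun · · P) Y) := fun i j hij =>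
    (hindep.indepFun hij).comp hf hf
  -- integrability
  have hbound : ∀ i ω, ‖Y i ω‖ ≤ |L0| + |L1| := by
    intro i ω
    rcases h01 i ω with h | h
    · have he : Y i ω = -L1 := by simp [hYdef, hfdef, h]
      rw [he, Real.norm_eq_abs, abs_neg]
      linarith [abs_nonneg L0]
    · have he : Y i ω = L0 := by simp [hYdef, hfdef, h]
      rw [he, Real.norm_eq_abs]
      linarith [abs_nonneg L1]
  have hYmeas : ∀ i, Measurable (Y i) := fun i => hf.comp (hmeas i)
  have hint : Integrable (Y 0) P := by
    refine (integrable_const (|L0| + |L1|)).mono'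
      (hYmeas 0).aestronglyMeasurable (ae_of_all _ (hbound 0))
  -- expectation
  have hexp : P[Y 0] = m := by
    have h1 : ∫ ω, Y 0 ω ∂P = ∫ x, f x ∂(Measure.map (X 0) P) :=
      (integral_map (hmeas 0).aemeasurable hf.aestronglyMeasurable).symm
    rw [show P[Y 0] = ∫ ω, Y 0 ω ∂P from rfl, h1, hlaw 0, hνdef]
    have hdi : ∀ a : ℝ, Integrable f (Measure.dirac a) := by
      intro a
      refine (integrable_const (f a)).congr ?_
      rw [Filter.EventuallyEq, MeasureTheory.ae_dirac_eq]
      exact Filter.eventually_pure.2 rfl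
    have hd1 : Integrable f (ENNReal.ofReal μa • Measure.dirac (1:ℝ)) :=
      (hdi 1).smul_measure ENNReal.ofReal_ne_top
    have hd0 : Integrable f (ENNReal.ofReal (1 - μa) • Measure.dirac (0:ℝ)) :=
      (hdi 0).smul_measure ENNReal.ofReal_ne_top
    rw [integral_add_measure hd1 hd0, integral_smul_measure, integral_smul_measure,
      integral_dirac, integral_dirac,
      ENNReal.toReal_ofReal hμa0.le, ENNReal.toReal_ofReal (by linarith)]
    simp only [hfdef, smul_eq_mul, hmdef]
    ring
  -- strong law
  have hslln := strong_law_ae_real Y hint hindepY hidentY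
  rw [hexp] at hslln
  filter_upwards [hslln] with ω hω
  have htend : Tendsto (fun t => ∑ i ∈ range t, Y i ω) atTop atTop := by
    have h1 : Tendsto (fun n : ℕ =>
        (n : ℝ) * ((∑ i ∈ range n, Y i ω) / n)) atTop atTop :=
      Tendsto.atTop_mul_pos hmpos tendsto_natCast_atTop_atTop hω
    refine h1.congr fun n => ?_
    rcases Nat.eq_zero_or_pos n with h | h
    · simp [h]
    · have : (n : ℝ) ≠ 0 := Nat.cast_ne_zero.mpr h.ne'
      field_simp
  constructor
  · exact htend
  · have := (tendsto_atTop.1 htend (Real.log (1 / α))).exists_forall_of_atTop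
    obtain ⟨N, hN⟩ := eventually_atTop.1 (tendsto_atTop.1 htend (Real.log (1 / α)))
    exact ⟨max N 1, le_max_right _ _, hN _ (le_max_left _ _)⟩
end

section
/- Fix reals μ, ε with 0 < μ−ε < μ < 1 and α ∈ (0,1). Let (X_i)_{i≥1} be i.i.d. Bernoulli(μ_a) random variables with μ_a ≤ μ−ε. Then P(Λ_t < log(1/α) for all t ≥ 1) ≥ 1 − α. -/
open MeasureTheory ProbabilityTheory Finset
open scoped ENNReal NNReal

lemma ville_aux {Ω : Type*} [MeasurableSpace Ω] (P : Measure Ω) [IsProbabilityMeasure P]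
    (Y : ℕ → Ω → ℝ) (C : ℝ) (c : ℝ) (hc : 0 < c)
    (hmeasY : ∀ i, Measurable (Y i))
    (hindep : iIndepFun Y P)
    (h0 : ∀ i ω, 0 ≤ Y i ω) (hCb : ∀ i ω, Y i ω ≤ C)
    (hE1 : ∀ i, ∫ ω, Y i ω ∂P ≤ 1) :
    P {ω | ∃ t, 1 ≤ t ∧ c ≤ ∏ i ∈ range t, Y i ω} ≤ ENNReal.ofReal (1 / c) := by
  classical
  set M : ℕ → Ω → ℝ := fun t ω => ∏ i ∈ range t, Y i ω with hM
  have hMmeas : ∀ t, Measurable (M t) := fun t =>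
    Finset.measurable_prod _ (fun i _ => hmeasY i)
  have hM0 : ∀ t ω, 0 ≤ M t ω := fun t ω =>
    Finset.prod_nonneg fun i _ => h0 i ω
  set C' : ℝ := max C 1 with hC'
  have hC'1 : (1:ℝ) ≤ C' := le_max_right _ _
  have hC'0 : (0:ℝ) ≤ C' := le_trans zero_le_one hC'1
  have hMbd : ∀ t ω, M t ω ≤ C' ^ t := by
    intro t ω
    calc M t ω ≤ ∏ _i ∈ range t, C' :=
          Finset.prod_le_prod (fun i _ => h0 i ω)
            (fun i _ => le_trans (hCb i ω) (le_max_left _ _))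
      _ = C' ^ t := by simp
  have hint : ∀ (f : Ω → ℝ) (K : ℝ), Measurable f → (∀ ω, |f ω| ≤ K) → Integrable f P :=
    fun f K hf hbd => ⟨hf.aestronglyMeasurable,
      HasFiniteIntegral.of_bounded (C := K) (Filter.Eventually.of_forall hbd)⟩
  have hMint : ∀ t, Integrable (M t) P := by
    intro t
    exact hint (M t) (C' ^ t) (hMmeas t)
      (fun ω => by rw [abs_of_nonneg (hM0 t ω)]; exact hMbd t ω)
  set E : ℕ → Set Ω := fun t => {ω | c ≤ M t ω ∧ ∀ s, 1 ≤ s → s < t → M s ω < c} with hEdef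
  set B : ℕ → Set Ω := fun n => {ω | ∃ t, 1 ≤ t ∧ t ≤ n ∧ c ≤ M t ω} with hBdef
  have hEmeas : ∀ t, MeasurableSet (E t) := by
    intro t
    have : E t = {ω | c ≤ M t ω} ∩ ⋂ s, ⋂ (_ : 1 ≤ s), ⋂ (_ : s < t), {ω | M s ω < c} := by
      ext ω; simp [hEdef, Set.mem_iInter]
    rw [this]
    exact (measurableSet_le measurable_const (hMmeas t)).inter
      (MeasurableSet.iInter fun s => MeasurableSet.iInter fun _ =>
        MeasurableSet.iInter fun _ => measurableSet_lt (hMmeas s) measurable_const)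
  have hBmeas : ∀ n, MeasurableSet (B n) := by
    intro n
    have : B n = ⋃ t, ⋃ (_ : 1 ≤ t), ⋃ (_ : t ≤ n), {ω | c ≤ M t ω} := by
      ext ω; simp only [hBdef, Set.mem_iUnion, Set.mem_setOf_eq]; tauto
    rw [this]
    exact MeasurableSet.iUnion fun t => MeasurableSet.iUnion fun _ =>
      MeasurableSet.iUnion fun _ => measurableSet_le measurable_const (hMmeas t)
  have hBc : ∀ n ω, ω ∈ (B n)ᶜ ↔ ∀ s, 1 ≤ s → s ≤ n → M s ω < c := by
    intro n ω
    simp only [Set.mem_compl_iff, hBdef, Set.mem_setOf_eq]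
    push_neg
    rfl
  -- key independence step
  have key : ∀ n, ∫ ω in (B n)ᶜ, M (n+1) ω ∂P ≤ ∫ ω in (B n)ᶜ, M n ω ∂P := by
    intro n
    set S : Finset ℕ := range n with hS
    set T : Finset ℕ := {n} with hT
    have hdisj : Disjoint S T := by
      simp [hS, hT, Finset.disjoint_singleton_right]
    have base := hindep.indepFun_finset S T hdisj hmeasY
    set Mv : ℕ → (S → ℝ) → ℝ := fun t v => ∏ i ∈ univ.filter (fun i : S => (i : ℕ) < t), v i
      with hMvdef
    have hMv : ∀ t, Measurable (Mv t) := fun t =>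
      Finset.measurable_prod _ (fun i _ => measurable_pi_apply i)
    have hMv_eq : ∀ t, t ≤ n → ∀ ω, Mv t (fun i : S => Y i ω) = M t ω := by
      intro t ht ω
      rw [hMvdef]
      simp only
      rw [Finset.prod_filter]
      rw [Finset.prod_coe_sort (f := fun i => if i < t then Y i ω else 1)]
      rw [← Finset.prod_filter]
      have : S.filter (· < t) = range t := by
        ext i; simp only [hS, Finset.mem_filter, Finset.mem_range]
        omega
      rw [this]
    set Φ : (S → ℝ) → ℝ :=
      fun v => Set.indicator {v | ∀ s, 1 ≤ s → s ≤ n → Mv s v < c} (Mv n) v with hΦdef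
    have hΦ : Measurable Φ := by
      apply (hMv n).indicator
      have : {v : S → ℝ | ∀ s, 1 ≤ s → s ≤ n → Mv s v < c}
          = ⋂ s, ⋂ (_ : 1 ≤ s), ⋂ (_ : s ≤ n), {v | Mv s v < c} := by
        ext v; simp [Set.mem_iInter]
      rw [this]
      exact MeasurableSet.iInter fun s => MeasurableSet.iInter fun _ =>
        MeasurableSet.iInter fun _ => measurableSet_lt (hMv s) measurable_const
    set e : (T → ℝ) → ℝ := fun v => v ⟨n, Finset.mem_singleton_self n⟩ with hedef
    have he : Measurable e := measurable_pi_apply _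
    have hFind : IndepFun (Set.indicator (B n)ᶜ (M n)) (Y n) P := by
      have hcomp := base.comp hΦ he
      have h1 : (Φ ∘ fun ω (i : S) => Y (i:ℕ) ω) = Set.indicator (B n)ᶜ (M n) := by
        funext ω
        simp only [Function.comp_apply, hΦdef]
        rw [Set.indicator_apply, Set.indicator_apply]
        have hmem : ((fun i : S => Y (i:ℕ) ω) ∈ {v | ∀ s, 1 ≤ s → s ≤ n → Mv s v < c})
            ↔ ω ∈ (B n)ᶜ := by
          rw [hBc n ω]
          constructor
          · intro h s h1 h2
            have := h s h1 h2
            rwa [hMv_eq s h2 ω] at this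
          · intro h s h1 h2
            rw [hMv_eq s h2 ω]
            exact h s h1 h2
        by_cases hω : ω ∈ (B n)ᶜ
        · rw [if_pos (hmem.mpr hω), if_pos hω, hMv_eq n le_rfl ω]
        · rw [if_neg (fun hh => hω (hmem.mp hh)), if_neg hω]
      have h2 : (e ∘ fun ω (i : T) => Y (i:ℕ) ω) = Y n := rfl
      rwa [h1, h2] at hcomp
    have hFint : Integrable (Set.indicator (B n)ᶜ (M n)) P :=
      ((hMint n).indicator (hBmeas n).compl)
    have hYint : Integrable (Y n) P :=
      hint (Y n) C' (hmeasY n) (fun ω => by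
        rw [abs_of_nonneg (h0 n ω)]; exact le_trans (hCb n ω) (le_max_left _ _))
    have hprod : ∫ ω, Set.indicator (B n)ᶜ (M n) ω * Y n ω ∂P
        = (∫ ω, Set.indicator (B n)ᶜ (M n) ω ∂P) * ∫ ω, Y n ω ∂P :=
      IndepFun.integral_mul_eq_mul_integral hFind hFint.aestronglyMeasurable hYint.aestronglyMeasurable
    have heq1 : ∫ ω in (B n)ᶜ, M (n+1) ω ∂P
        = ∫ ω, Set.indicator (B n)ᶜ (M n) ω * Y n ω ∂P := by
      rw [← integral_indicator (hBmeas n).compl]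
      congr 1
      funext ω
      rw [Set.indicator_apply, Set.indicator_apply]
      by_cases hω : ω ∈ (B n)ᶜ
      · rw [if_pos hω, if_pos hω, hM]
        simp only
        rw [Finset.prod_range_succ]
      · rw [if_neg hω, if_neg hω, zero_mul]
    have hFnn : 0 ≤ ∫ ω, Set.indicator (B n)ᶜ (M n) ω ∂P :=
      integral_nonneg fun ω => Set.indicator_nonneg (fun x _ => hM0 n x) ω
    calc ∫ ω in (B n)ᶜ, M (n+1) ω ∂P
        = (∫ ω, Set.indicator (B n)ᶜ (M n) ω ∂P) * ∫ ω, Y n ω ∂P := by rw [heq1, hprod]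
      _ ≤ (∫ ω, Set.indicator (B n)ᶜ (M n) ω ∂P) * 1 :=
          mul_le_mul_of_nonneg_left (hE1 n) hFnn
      _ = ∫ ω in (B n)ᶜ, M n ω ∂P := by rw [mul_one, integral_indicator (hBmeas n).compl]
  -- main induction
  have sbound : ∀ n, (∑ t ∈ Icc 1 n, ∫ ω in E t, M t ω ∂P) + ∫ ω in (B n)ᶜ, M n ω ∂P ≤ 1 := by
    intro n
    induction n with
    | zero =>
        have hB0 : (B 0)ᶜ = Set.univ := by
          ext ω; simp [hBdef]
        simp [hB0, hM]
    | succ n ih =>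
        have hsum : ∑ t ∈ Icc 1 (n+1), ∫ ω in E t, M t ω ∂P
            = (∑ t ∈ Icc 1 n, ∫ ω in E t, M t ω ∂P) + ∫ ω in E (n+1), M (n+1) ω ∂P := by
          rw [Finset.sum_Icc_succ_top (by omega)]
        have hseteq : E (n+1) ∪ (B (n+1))ᶜ = (B n)ᶜ := by
          ext ω
          rw [Set.mem_union, hBc, hBc, hEdef]
          simp only [Set.mem_setOf_eq]
          constructor
          · rintro (⟨h1, h2⟩ | h)
            · intro s hs1 hs2; exact h2 s hs1 (by omega)
            · intro s hs1 hs2; exact h s hs1 (by omega)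
          · intro h
            by_cases hc' : c ≤ M (n+1) ω
            · exact Or.inl ⟨hc', fun s hs1 hs2 => h s hs1 (by omega)⟩
            · refine Or.inr fun s hs1 hs2 => ?_
              rcases Nat.lt_or_ge s (n+1) with hlt | hge
              · exact h s hs1 (by omega)
              · have : s = n+1 := by omega
                rw [this]; exact lt_of_not_ge hc'
        have hdisj2 : Disjoint (E (n+1)) ((B (n+1))ᶜ) := by
          rw [Set.disjoint_left]
          intro ω hω hω'
          rw [hBc] at hω'
          exact absurd hω.1 (not_le.mpr (hω' (n+1) (by omega) le_rfl))
        have hunion : ∫ ω in E (n+1), M (n+1) ω ∂P + ∫ ω in (B (n+1))ᶜ, M (n+1) ω ∂P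
            = ∫ ω in (B n)ᶜ, M (n+1) ω ∂P := by
          rw [← hseteq]
          exact (setIntegral_union hdisj2 (hBmeas (n+1)).compl
            (hMint (n+1)).integrableOn (hMint (n+1)).integrableOn).symm
        calc (∑ t ∈ Icc 1 (n+1), ∫ ω in E t, M t ω ∂P) + ∫ ω in (B (n+1))ᶜ, M (n+1) ω ∂P
            = (∑ t ∈ Icc 1 n, ∫ ω in E t, M t ω ∂P)
              + (∫ ω in E (n+1), M (n+1) ω ∂P + ∫ ω in (B (n+1))ᶜ, M (n+1) ω ∂P) := by
              rw [hsum]; ring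
          _ = (∑ t ∈ Icc 1 n, ∫ ω in E t, M t ω ∂P) + ∫ ω in (B n)ᶜ, M (n+1) ω ∂P := by
              rw [hunion]
          _ ≤ (∑ t ∈ Icc 1 n, ∫ ω in E t, M t ω ∂P) + ∫ ω in (B n)ᶜ, M n ω ∂P :=
              add_le_add_right (key n) _
          _ ≤ 1 := ih
  -- measure bound for each n
  have hBn : ∀ n, P (B n) ≤ ENNReal.ofReal (1 / c) := by
    intro n
    have hdecomp : B n = ⋃ t ∈ Icc 1 n, E t := by
      ext ω
      simp only [hBdef, Set.mem_setOf_eq, Set.mem_iUnion, Finset.mem_Icc]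
      constructor
      · intro h
        have hex : ∃ t, 1 ≤ t ∧ t ≤ n ∧ c ≤ M t ω := h
        set t0 := Nat.find hex with ht0
        obtain ⟨h1, h2, h3⟩ := Nat.find_spec hex
        refine ⟨t0, ⟨h1, h2⟩, h3, ?_⟩
        intro s hs1 hs2
        by_contra hcon
        exact absurd ⟨hs1, by omega, not_lt.mp hcon⟩ (Nat.find_min hex hs2)
      · rintro ⟨t, ⟨h1, h2⟩, h3, _⟩
        exact ⟨t, h1, h2, h3⟩
    have hdisjE : ∀ s ∈ Icc 1 n, ∀ t ∈ Icc 1 n, s ≠ t → Disjoint (E s) (E t) := by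
      intro s hs t ht hst
      rw [Finset.mem_Icc] at hs ht
      rcases Nat.lt_or_ge s t with h | h
      · rw [Set.disjoint_left]
        rintro ω ⟨hs1, _⟩ ⟨_, ht2⟩
        exact absurd hs1 (not_le.mpr (ht2 s hs.1 h))
      · have h' : t < s := by omega
        rw [Set.disjoint_left]
        rintro ω ⟨_, hs2⟩ ⟨ht1, _⟩
        exact absurd ht1 (not_le.mpr (hs2 t ht.1 h'))
    have hmeasure : P (B n) = ∑ t ∈ Icc 1 n, P (E t) := by
      rw [hdecomp]
      exact measure_biUnion_finset
        (fun s hs t ht hst => hdisjE s (Finset.mem_coe.mp hs) t (Finset.mem_coe.mp ht) hst)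
        (fun t _ => hEmeas t)
    have htR : ∀ t ∈ Icc 1 n, c * (P (E t)).toReal ≤ ∫ ω in E t, M t ω ∂P := by
      intro t _
      exact setIntegral_ge_of_const_le_real (hEmeas t) (measure_ne_top P _)
        (fun ω hω => hω.1) (hMint t).integrableOn
    have hsum2 : c * (P (B n)).toReal ≤ 1 := by
      have h1 : (P (B n)).toReal = ∑ t ∈ Icc 1 n, (P (E t)).toReal := by
        rw [hmeasure, ENNReal.toReal_sum (fun t _ => measure_ne_top P _)]
      calc c * (P (B n)).toReal = ∑ t ∈ Icc 1 n, c * (P (E t)).toReal := by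
            rw [h1, Finset.mul_sum]
        _ ≤ ∑ t ∈ Icc 1 n, ∫ ω in E t, M t ω ∂P := Finset.sum_le_sum htR
        _ ≤ 1 := by
            have hsb := sbound n
            have hnn : 0 ≤ ∫ ω in (B n)ᶜ, M n ω ∂P :=
              setIntegral_nonneg (hBmeas n).compl (fun ω _ => hM0 n ω)
            linarith
    rw [ENNReal.le_ofReal_iff_toReal_le (measure_ne_top P _) (by positivity)]
    rw [le_div_iff₀ hc]
    linarith [hsum2]
  have hU : {ω | ∃ t, 1 ≤ t ∧ c ≤ M t ω} = ⋃ n, B n := by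
    ext ω
    simp only [Set.mem_setOf_eq, Set.mem_iUnion, hBdef]
    constructor
    · rintro ⟨t, h1, h2⟩; exact ⟨t, t, h1, le_rfl, h2⟩
    · rintro ⟨n, t, h1, _, h2⟩; exact ⟨t, h1, h2⟩
  have hmono : Monotone B := by
    intro m n hmn ω hω
    obtain ⟨t, h1, h2, h3⟩ := hω
    exact ⟨t, h1, le_trans h2 hmn, h3⟩
  rw [show {ω | ∃ t, 1 ≤ t ∧ c ≤ M t ω} = ⋃ n, B n from hU]
  rw [(hmono.directed_le).measure_iUnion]
  exact iSup_le hBn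
/-- Lemma 2(ii): for i.i.d. `Bernoulli(μ_a)` samples with `μ_a ≤ μ−ε`, the probability that
the log-likelihood ratio stays below `log(1/α)` for all `t ≥ 1` is at least `1 − α`. -/
theorem stmt_8 {Ω : Type*} [MeasurableSpace Ω] (P : Measure Ω) [IsProbabilityMeasure P]
    (μ ε α μa : ℝ) (hε : 0 < ε) (hμε : 0 < μ - ε) (hμ : μ < 1)
    (hα : α ∈ Set.Ioo (0 : ℝ) 1)
    (hμa0 : 0 ≤ μa) (hμa : μa ≤ μ - ε)
    (X : ℕ → Ω → ℝ)
    (hmeas : ∀ i, Measurable (X i))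
    (h01 : ∀ i ω, X i ω = 0 ∨ X i ω = 1)
    (hindep : iIndepFun X P)
    (hdist : ∀ i, P {ω | X i ω = 1} = ENNReal.ofReal μa) :
    1 - ENNReal.ofReal α ≤
      P {ω | ∀ t : ℕ, 1 ≤ t →
        ∑ i ∈ range t,
          (X i ω * Real.log (μ / (μ - ε))
            - (1 - X i ω) * Real.log ((1 - μ + ε) / (1 - μ))) < Real.log (1 / α)} := by
  obtain ⟨hα0, hα1⟩ := hα
  have h1μ : 0 < 1 - μ := by linarith
  have h1με : 0 < 1 - μ + ε := by linarith
  set a : ℝ := μ / (μ - ε) with ha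
  set b : ℝ := (1 - μ) / (1 - μ + ε) with hb
  have ha1 : 1 < a := (one_lt_div hμε).mpr (by linarith)
  have hb0 : 0 < b := div_pos h1μ h1με
  have hb1 : b < 1 := (div_lt_one h1με).mpr (by linarith)
  set Y : ℕ → Ω → ℝ := fun i ω => b + (a - b) * X i ω with hY
  have hYval : ∀ i ω, Y i ω = a ∨ Y i ω = b := by
    intro i ω
    rcases h01 i ω with h | h
    · right; simp [hY, h]
    · left; simp [hY, h]
  have hYmeas : ∀ i, Measurable (Y i) := fun i =>
    measurable_const.add (measurable_const.mul (hmeas i))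
  have hYindep : iIndepFun Y P :=
    hindep.comp (fun _ x => b + (a - b) * x)
      (fun _ => measurable_const.add (measurable_const.mul measurable_id))
  have hY0 : ∀ i ω, 0 ≤ Y i ω := by
    intro i ω
    rcases hYval i ω with h | h <;> rw [h] <;> linarith
  have hYC : ∀ i ω, Y i ω ≤ a := by
    intro i ω
    rcases hYval i ω with h | h <;> rw [h] <;> linarith
  have hXint : ∀ i, Integrable (X i) P := by
    intro i
    refine ⟨(hmeas i).aestronglyMeasurable,
      HasFiniteIntegral.of_bounded (C := 1) (Filter.Eventually.of_forall fun ω => ?_)⟩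
    rcases h01 i ω with h | h <;> simp [h]
  have hXexp : ∀ i, ∫ ω, X i ω ∂P = μa := by
    intro i
    have hset : MeasurableSet {ω | X i ω = 1} := by
      have : {ω | X i ω = 1} = X i ⁻¹' {1} := rfl
      rw [this]
      exact (hmeas i) (measurableSet_singleton 1)
    have hXind : X i = Set.indicator {ω | X i ω = 1} (fun _ => (1 : ℝ)) := by
      funext ω
      rcases h01 i ω with h | h <;>
        simp [Set.indicator_apply, Set.mem_setOf_eq, h]
    rw [hXind, integral_indicator_const (1 : ℝ) hset, Measure.real, hdist i, smul_eq_mul, mul_one,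
      ENNReal.toReal_ofReal hμa0]
  have hYE : ∀ i, ∫ ω, Y i ω ∂P ≤ 1 := by
    intro i
    have : ∫ ω, Y i ω ∂P = b + (a - b) * μa := by
      rw [hY]
      simp only
      rw [integral_add (integrable_const b) ((hXint i).const_mul (a - b)),
        integral_const, integral_const_mul, hXexp i]
      simp
    rw [this]
    have hident : b + (a - b) * (μ - ε) = 1 := by
      rw [ha, hb]
      field_simp
      ring
    nlinarith [hμa, ha1, hb1]
  have hville := ville_aux P Y a (1 / α) (by positivity) hYmeas hYindep hY0 hYC hYE
  rw [one_div_one_div] at hville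
  set L : ℝ := Real.log (1 / α) with hL
  set T : Set Ω := {ω | ∀ t : ℕ, 1 ≤ t →
      ∑ i ∈ range t,
        (X i ω * Real.log a - (1 - X i ω) * Real.log ((1 - μ + ε) / (1 - μ))) < L} with hT
  have hΛmeas : ∀ t, Measurable (fun ω =>
      ∑ i ∈ range t,
        (X i ω * Real.log a - (1 - X i ω) * Real.log ((1 - μ + ε) / (1 - μ)))) := by
    intro t
    apply Finset.measurable_sum
    intro i _
    exact ((hmeas i).mul measurable_const).sub
      ((measurable_const.sub (hmeas i)).mul measurable_const)
  have hTmeas : MeasurableSet T := by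
    have : T = ⋂ t, ⋂ (_ : 1 ≤ t), {ω | (∑ i ∈ range t,
        (X i ω * Real.log a - (1 - X i ω) * Real.log ((1 - μ + ε) / (1 - μ)))) < L} := by
      ext ω; simp [hT, Set.mem_iInter]
    rw [this]
    exact MeasurableSet.iInter fun t => MeasurableSet.iInter fun _ =>
      measurableSet_lt (hΛmeas t) measurable_const
  have hexp : ∀ t ω, Real.exp (∑ i ∈ range t,
      (X i ω * Real.log a - (1 - X i ω) * Real.log ((1 - μ + ε) / (1 - μ))))
      = ∏ i ∈ range t, Y i ω := by
    intro t ω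
    rw [Real.exp_sum]
    refine Finset.prod_congr rfl fun i _ => ?_
    rcases h01 i ω with h | h
    · have heq : X i ω * Real.log a - (1 - X i ω) * Real.log ((1 - μ + ε) / (1 - μ))
          = -Real.log ((1 - μ + ε) / (1 - μ)) := by rw [h]; ring
      rw [heq, Real.exp_neg, Real.exp_log (by positivity), hY]
      simp only [h, mul_zero, add_zero]
      rw [hb, inv_div]
    · have heq : X i ω * Real.log a - (1 - X i ω) * Real.log ((1 - μ + ε) / (1 - μ))
          = Real.log a := by rw [h]; ring
      rw [heq, Real.exp_log (by positivity), hY]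
      simp only [h, mul_one]
      ring
  have hTc : Tᶜ = {ω | ∃ t, 1 ≤ t ∧ 1 / α ≤ ∏ i ∈ range t, Y i ω} := by
    ext ω
    simp only [Set.mem_compl_iff, hT, Set.mem_setOf_eq]
    push_neg
    refine exists_congr fun t => and_congr_right fun _ => ?_
    rw [← hexp t ω, hL, ← Real.exp_log (show (0:ℝ) < 1/α by positivity), Real.exp_le_exp,
      Real.exp_log (show (0:ℝ) < 1/α by positivity)]
  have hPTc : P Tᶜ ≤ ENNReal.ofReal α := by
    rw [hTc]; exact hville
  have hcompl : P Tᶜ = 1 - P T := prob_compl_eq_one_sub hTmeas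
  have hPT : (1 : ℝ≥0∞) - ENNReal.ofReal α ≤ P T := by
    have h1 : (1 : ℝ≥0∞) - ENNReal.ofReal α ≤ 1 - P Tᶜ := tsub_le_tsub_left hPTc 1
    have h2 : (1 : ℝ≥0∞) - P Tᶜ = P T := by
      rw [hcompl, ENNReal.sub_sub_cancel ENNReal.one_ne_top prob_le_one]
    rwa [h2] at h1
  exact hPT
end

section
/- Fix reals μ, ε with 0 < μ−ε < μ < 1 and α ∈ (0,1). Let t be a positive integer and k an integer with 0 ≤ k ≤ t. If k·log(μ/(μ−ε)) + (k − t)·log((1−μ+ε)/(1−μ)) ≥ log(1/α), then k/t ≥ μ − ε. -/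
/-- If the log-likelihood ratio `k·λ₀ + (k−t)·λ₁` after `t` samples with `k` ones reaches the
threshold `log(1/α)`, then the empirical frequency satisfies `k/t ≥ μ − ε`. -/
theorem stmt_9 (μ ε α : ℝ) (hε : 0 < ε) (hμε : 0 < μ - ε) (hμ : μ < 1)
    (hα : α ∈ Set.Ioo (0 : ℝ) 1)
    (t k : ℕ) (ht : 1 ≤ t) (hk : k ≤ t)
    (h : Real.log (1 / α) ≤
      (k : ℝ) * Real.log (μ / (μ - ε))
        + ((k : ℝ) - (t : ℝ)) * Real.log ((1 - μ + ε) / (1 - μ))) :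
    μ - ε ≤ (k : ℝ) / (t : ℝ) := by
  have h1μ : 0 < 1 - μ := by linarith
  have hden : 0 < 1 - μ + ε := by linarith
  have ht0 : (0:ℝ) < (t:ℝ) := by exact_mod_cast ht
  have hkt : (k:ℝ) ≤ (t:ℝ) := by exact_mod_cast hk
  have hk0 : (0:ℝ) ≤ (k:ℝ) := Nat.cast_nonneg k
  set L0 := Real.log (μ / (μ - ε)) with hL0
  set L1 := Real.log ((1 - μ + ε) / (1 - μ)) with hL1
  -- A0 : L0 * (μ - ε) ≤ ε
  have A0 : L0 * (μ - ε) ≤ ε := by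
    have h0 : L0 ≤ μ / (μ - ε) - 1 :=
      Real.log_le_sub_one_of_pos (div_pos (by linarith) hμε)
    have h1 : (μ / (μ - ε) - 1) * (μ - ε) = ε := by field_simp; ring
    nlinarith [mul_le_mul_of_nonneg_right h0 hμε.le]
  -- A1 : ε ≤ L1 * (1 - μ + ε)
  have A1 : ε ≤ L1 * (1 - μ + ε) := by
    have h0 : Real.log ((1 - μ) / (1 - μ + ε)) ≤ (1 - μ) / (1 - μ + ε) - 1 :=
      Real.log_le_sub_one_of_pos (div_pos h1μ hden)
    have h2 : Real.log ((1 - μ) / (1 - μ + ε)) = -L1 := by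
      rw [hL1, ← Real.log_inv]
      congr 1
      field_simp
    rw [h2] at h0
    have h1 : ((1 - μ) / (1 - μ + ε) - 1) * (1 - μ + ε) = -ε := by field_simp; ring
    nlinarith [mul_le_mul_of_nonneg_right h0 hden.le]
  have hlog : 0 < Real.log (1 / α) :=
    Real.log_pos (one_lt_one_div hα.1 hα.2)
  by_contra hcon
  push_neg at hcon
  have hklt : (k:ℝ) < (μ - ε) * t := by
    rw [div_lt_iff₀ ht0] at hcon
    linarith
  have step1 : (k:ℝ) * (L0 * (μ - ε)) ≤ (k:ℝ) * ε :=
    mul_le_mul_of_nonneg_left A0 hk0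
  have step2 : ((k:ℝ) - t) * (L1 * (1 - μ + ε)) ≤ ((k:ℝ) - t) * ε :=
    mul_le_mul_of_nonpos_left A1 (by linarith)
  have hsum : 0 < (k:ℝ) * L0 + ((k:ℝ) - t) * L1 := lt_of_lt_of_le hlog h
  nlinarith [mul_le_mul_of_nonneg_right step1 hden.le,
    mul_le_mul_of_nonneg_right step2 hμε.le,
    mul_pos (mul_pos hμε hden) hsum,
    mul_lt_mul_of_pos_right hklt hε]
end

section
/- Let K ≥ M ≥ 1 be integers, α ∈ (0,1), and fix reals μ, ε with 0 < μ−ε < μ < 1. Let (Ω, F, P) be a probability space with a filtration (F_t)_{t≥1}, let T be a stopping time with E[T] < ∞, and let (A_t)_{t≥1} be events with A_t ∈ F_t such that for every t ≥ 1, P(A_t | F_{t−1}) ≥ 1/(K−M+1) almost surely on {T ≥ t}. If moreover E[∑_{t=1}^T 1_{A_t}] ≤ M·(1 + log(1/α)/kl(μ, μ−ε)), then E[T] ≤ M·(K−M+1)·(1 + log(1/α)/kl(μ, μ−ε)). -/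
open MeasureTheory ProbabilityTheory Finset
open scoped ENNReal NNReal

/-- Abstract form of Theorem 4 (relaxed inspector): if at every step before the stopping time
`T` an unsafe machine is sampled with conditional probability at least `1/(K−M+1)`, and the
expected number of unsafe-machine pulls up to `T` is at most `M·(1 + log(1/α)/kl(μ, μ−ε))`,
then `E[T] ≤ M·(K−M+1)·(1 + log(1/α)/kl(μ, μ−ε))`. -/
theorem stmt_13 {Ω : Type*} {m0 : MeasurableSpace Ω} (P : Measure Ω) [IsProbabilityMeasure P]
    (K M : ℕ) (hM : 1 ≤ M) (hKM : M ≤ K)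
    (μ ε α : ℝ) (hε : 0 < ε) (hμε : 0 < μ - ε) (hμ : μ < 1)
    (hα : α ∈ Set.Ioo (0 : ℝ) 1)
    (ℱ : Filtration ℕ m0) (T : Ω → ℕ)
    (hT : IsStoppingTime ℱ (fun ω => (T ω : WithTop ℕ)))
    (hTint : ∫⁻ ω, (T ω : ℝ≥0∞) ∂P < ⊤)
    (A : ℕ → Set Ω)
    (hA : ∀ t : ℕ, 1 ≤ t → MeasurableSet[ℱ t] (A t))
    (hcond : ∀ t : ℕ, 1 ≤ t →
      ∀ᵐ ω ∂P, t ≤ T ω →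
        1 / ((K : ℝ) - M + 1) ≤ (P[(A t).indicator (fun _ => (1 : ℝ)) | ℱ (t - 1)]) ω)
    (hpulls : ∫⁻ ω, ∑ t ∈ Icc 1 (T ω), (A t).indicator (fun _ => (1 : ℝ≥0∞)) ω ∂P ≤
      ENNReal.ofReal ((M : ℝ) * (1 + Real.log (1 / α) /
        (μ * Real.log (μ / (μ - ε)) + (1 - μ) * Real.log ((1 - μ) / (1 - μ + ε)))))) :
    ∫⁻ ω, (T ω : ℝ≥0∞) ∂P ≤
      ENNReal.ofReal ((M : ℝ) * ((K : ℝ) - M + 1) * (1 + Real.log (1 / α) /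
        (μ * Real.log (μ / (μ - ε)) + (1 - μ) * Real.log ((1 - μ) / (1 - μ + ε))))) := by
  set kl := μ * Real.log (μ / (μ - ε)) + (1 - μ) * Real.log ((1 - μ) / (1 - μ + ε)) with hklk
  set c := (M : ℝ) * (1 + Real.log (1 / α) / kl) with hc
  set q := (K : ℝ) - (M : ℝ) + 1 with hq
  have hKM' : (M : ℝ) ≤ K := Nat.cast_le.2 hKM
  have hq0 : 0 < q := by simp only [hq]; linarith
  set B : ℕ → Set Ω := fun t => {ω | 1 ≤ t ∧ t ≤ T ω} with hB
  have hB0 : B 0 = ∅ := by ext ω; simp [hB]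
  have hBmeas' : ∀ t, 1 ≤ t → MeasurableSet[ℱ (t - 1)] (B t) := by
    intro t ht
    have : B t = {ω | T ω ≤ t - 1}ᶜ := by
      ext ω; simp only [hB, Set.mem_setOf_eq, Set.mem_compl_iff]; omega
    rw [this]
    have e : {ω | T ω ≤ t - 1} = {ω | (T ω : WithTop ℕ) ≤ ((t - 1 : ℕ) : WithTop ℕ)} := by
      ext ω; simp
    rw [e]
    exact (hT (t - 1)).compl
  have hBmeas : ∀ t, MeasurableSet (B t) := by
    intro t
    rcases Nat.eq_zero_or_pos t with h0 | h1
    · rw [h0, hB0]; exact MeasurableSet.empty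
    · exact ℱ.le _ _ (hBmeas' t h1)
  have hAmeas : ∀ t, 1 ≤ t → MeasurableSet (A t) := fun t ht => ℱ.le t _ (hA t ht)
  -- key inequality
  have key : ∀ t, ENNReal.ofReal (1 / q) * P (B t) ≤ P (A t ∩ B t) := by
    intro t
    rcases Nat.eq_zero_or_pos t with h0 | h1
    · rw [h0, hB0]; simp
    · have hAm := hAmeas t h1
      have hf : Integrable ((A t).indicator (fun _ => (1 : ℝ))) P :=
        (integrable_const (1 : ℝ)).indicator hAm
      have h1' : ∫ ω in B t, (P[(A t).indicator (fun _ => (1 : ℝ)) | ℱ (t - 1)]) ω ∂P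
          = ∫ ω in B t, (A t).indicator (fun _ => (1 : ℝ)) ω ∂P :=
        setIntegral_condExp (ℱ.le (t - 1)) hf (hBmeas' t h1)
      have h2 : ∫ ω in B t, (A t).indicator (fun _ => (1 : ℝ)) ω ∂P
          = (P (A t ∩ B t)).toReal := by
        rw [integral_indicator hAm, Measure.restrict_restrict hAm, setIntegral_const,
          smul_eq_mul, mul_one]
        rfl
      have hle : ∀ᵐ ω ∂(P.restrict (B t)),
          1 / q ≤ (P[(A t).indicator (fun _ => (1 : ℝ)) | ℱ (t - 1)]) ω := by
        rw [ae_restrict_iff' (hBmeas t)]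
        filter_upwards [hcond t h1] with ω hω hωB
        exact hω hωB.2
      have h3 : (1 / q) * (P (B t)).toReal
          ≤ ∫ ω in B t, (P[(A t).indicator (fun _ => (1 : ℝ)) | ℱ (t - 1)]) ω ∂P := by
        have := setIntegral_mono_ae_restrict (integrableOn_const (measure_ne_top _ _))
          integrable_condExp.integrableOn hle
        rw [setIntegral_const, smul_eq_mul, mul_comm] at this; exact this
      have h4 : (1 / q) * (P (B t)).toReal ≤ (P (A t ∩ B t)).toReal := by
        rw [← h2, ← h1']; exact h3
      calc ENNReal.ofReal (1 / q) * P (B t)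
          = ENNReal.ofReal ((1 / q) * (P (B t)).toReal) := by
            rw [ENNReal.ofReal_mul (by positivity), ENNReal.ofReal_toReal (measure_ne_top _ _)]
        _ ≤ ENNReal.ofReal ((P (A t ∩ B t)).toReal) := ENNReal.ofReal_le_ofReal h4
        _ = P (A t ∩ B t) := ENNReal.ofReal_toReal (measure_ne_top _ _)
  -- expected value of T as a sum
  have hTsum : ∫⁻ ω, (T ω : ℝ≥0∞) ∂P = ∑' t, P (B t) := by
    have hpt : ∀ ω, (T ω : ℝ≥0∞) = ∑' t, (B t).indicator (fun _ => (1 : ℝ≥0∞)) ω := by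
      intro ω
      rw [tsum_eq_sum (s := Icc 1 (T ω)) (fun t ht => by
        rw [Set.indicator_of_notMem]
        simpa [hB, Set.mem_setOf_eq] using (by simpa using ht : ¬ (1 ≤ t ∧ t ≤ T ω)))]
      rw [Finset.sum_congr rfl (fun t ht => by
        rw [Set.indicator_of_mem]
        simpa [hB, Set.mem_setOf_eq] using Finset.mem_Icc.1 ht)]
      simp [Nat.card_Icc]
    calc ∫⁻ ω, (T ω : ℝ≥0∞) ∂P
        = ∫⁻ ω, ∑' t, (B t).indicator (fun _ => (1 : ℝ≥0∞)) ω ∂P := by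
          exact lintegral_congr hpt
      _ = ∑' t, ∫⁻ ω, (B t).indicator (fun _ => (1 : ℝ≥0∞)) ω ∂P :=
          lintegral_tsum (fun t => ((measurable_const.indicator (hBmeas t))).aemeasurable)
      _ = ∑' t, P (B t) := by
          refine tsum_congr fun t => ?_
          rw [lintegral_indicator (hBmeas t)]
          simp
  -- expected pulls as a sum
  have hPsum : ∫⁻ ω, ∑ t ∈ Icc 1 (T ω), (A t).indicator (fun _ => (1 : ℝ≥0∞)) ω ∂P
      = ∑' t, P (A t ∩ B t) := by
    have hABm : ∀ t, MeasurableSet (A t ∩ B t) := by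
      intro t
      rcases Nat.eq_zero_or_pos t with h0 | h1
      · rw [h0, hB0, Set.inter_empty]; exact MeasurableSet.empty
      · exact (hAmeas t h1).inter (hBmeas t)
    have hpt : ∀ ω, ∑ t ∈ Icc 1 (T ω), (A t).indicator (fun _ => (1 : ℝ≥0∞)) ω
        = ∑' t, (A t ∩ B t).indicator (fun _ => (1 : ℝ≥0∞)) ω := by
      intro ω
      rw [tsum_eq_sum (s := Icc 1 (T ω)) (fun t ht => by
        rw [Set.indicator_of_notMem]
        exact fun h => (by simpa using ht : ¬ (1 ≤ t ∧ t ≤ T ω)) h.2)]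
      refine Finset.sum_congr rfl fun t ht => ?_
      have hωB : ω ∈ B t := by simpa [hB, Set.mem_setOf_eq] using Finset.mem_Icc.1 ht
      by_cases hωA : ω ∈ A t
      · rw [Set.indicator_of_mem hωA, Set.indicator_of_mem (Set.mem_inter hωA hωB)]
      · rw [Set.indicator_of_notMem hωA, Set.indicator_of_notMem (fun h => hωA h.1)]
    calc ∫⁻ ω, ∑ t ∈ Icc 1 (T ω), (A t).indicator (fun _ => (1 : ℝ≥0∞)) ω ∂P
        = ∫⁻ ω, ∑' t, (A t ∩ B t).indicator (fun _ => (1 : ℝ≥0∞)) ω ∂P :=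
          lintegral_congr hpt
      _ = ∑' t, ∫⁻ ω, (A t ∩ B t).indicator (fun _ => (1 : ℝ≥0∞)) ω ∂P :=
          lintegral_tsum (fun t => ((measurable_const.indicator (hABm t))).aemeasurable)
      _ = ∑' t, P (A t ∩ B t) := by
          refine tsum_congr fun t => ?_
          rw [lintegral_indicator (hABm t)]
          simp
  have main : ENNReal.ofReal (1 / q) * ∫⁻ ω, (T ω : ℝ≥0∞) ∂P ≤ ENNReal.ofReal c := by
    rw [hTsum, ← ENNReal.tsum_mul_left]
    exact le_trans (ENNReal.tsum_le_tsum key) (by rw [← hPsum]; exact hpulls)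
  have hmul := mul_le_mul_right main (ENNReal.ofReal q)
  rw [← mul_assoc, ← ENNReal.ofReal_mul hq0.le] at hmul
  have hq1 : q * (1 / q) = 1 := by field_simp
  rw [hq1, ENNReal.ofReal_one, one_mul, ← ENNReal.ofReal_mul hq0.le] at hmul
  refine le_trans hmul (le_of_eq ?_)
  congr 1
  simp only [hc, hq]
  ring
end
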